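/- For all natural numbers k and l with 2 ≤ k ≤ l, the falling factorial satisfies l·(l−1)···(l−k+1) = l!/(l−k)! ≤ l^k − (k(k−1)/2)·l^{k−1} + (1/2)·(k(k−1)/2)²·l^{k−2}. -/

import Mathlib

open Finset Real

/-- For `x ≥ 0`, `exp(-x) ≤ 1 - x + x²/2`. -/
lemma exp_neg_le_quadratic {x : ℝ} (hx : 0 ≤ x) :
    Real.exp (-x) ≤ 1 - x + x ^ 2 / 2 := by
  have h1 : 1 + x + x ^ 2 / 2 ≤ Real.exp x := Real.quadratic_le_exp_of_nonneg hx
  have h2 : (0:ℝ) < 1 + x + x ^ 2 / 2 := by positivity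
  have h3 : Real.exp (-x) = 1 / Real.exp x := by
    rw [Real.exp_neg]; ring
  rw [h3]
  have h4 : 1 / Real.exp x ≤ 1 / (1 + x + x ^ 2 / 2) :=
    one_div_le_one_div_of_le h2 h1
  refine h4.trans ?_
  rw [div_le_iff₀ h2]
  nlinarith [sq_nonneg x, sq_nonneg (x^2)]

/-- For naturals `2 ≤ k ≤ l`, the falling factorial satisfies
`l!/(l−k)! ≤ l^k − (k(k−1)/2)·l^{k−1} + (1/2)·(k(k−1)/2)²·l^{k−2}`. -/
theorem descFactorial_upper_bound (k l : ℕ) (hk : 2 ≤ k) (hkl : k ≤ l) :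
    (Nat.factorial l : ℝ) / (Nat.factorial (l - k) : ℝ)
      ≤ (l : ℝ) ^ k - ((k : ℝ) * ((k : ℝ) - 1) / 2) * (l : ℝ) ^ (k - 1)
        + (1 / 2) * ((k : ℝ) * ((k : ℝ) - 1) / 2) ^ 2 * (l : ℝ) ^ (k - 2) := by
  have hl0 : (0:ℝ) < l := by
    have : 2 ≤ l := le_trans hk hkl
    positivity
  -- rewrite LHS as descFactorial
  have hdf : (Nat.factorial l : ℝ) / (Nat.factorial (l - k) : ℝ)
      = (Nat.descFactorial l k : ℝ) := by
    have := Nat.factorial_mul_descFactorial hkl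
    have hfac : (0:ℝ) < (Nat.factorial (l - k) : ℝ) := by
      exact_mod_cast Nat.factorial_pos (l - k)
    field_simp
    rw [mul_comm] at this
    exact_mod_cast this.symm.trans (mul_comm _ _)
  rw [hdf, Nat.descFactorial_eq_prod_range]
  -- cast the product to reals
  have hcast : ((∏ i ∈ range k, (l - i) : ℕ) : ℝ) = ∏ i ∈ range k, ((l : ℝ) - i) := by
    push_cast
    refine Finset.prod_congr rfl ?_
    intro i hi
    have : i ≤ l := le_trans (le_of_lt (mem_range.mp hi)) hkl
    push_cast [Nat.cast_sub this]
    ring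
  rw [hcast]
  set s : ℝ := (k : ℝ) * ((k : ℝ) - 1) / 2 with hs
  have hsum : (∑ i ∈ range k, (i : ℝ)) = s := by
    have hg := Finset.sum_range_id_mul_two k
    have hg' : ((∑ i ∈ range k, i : ℕ) : ℝ) * 2 = (k:ℝ) * ((k:ℝ) - 1) := by
      have h1 : ((∑ i ∈ range k, i : ℕ) : ℝ) * 2 = ((k * (k - 1) : ℕ) : ℝ) := by
        exact_mod_cast congrArg (Nat.cast (R := ℝ)) hg
      rw [h1]
      push_cast [Nat.cast_sub (show 1 ≤ k by omega)]
      ring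
    push_cast at hg'
    rw [hs]
    linarith
  have hs0 : 0 ≤ s := by
    rw [hs]
    have : (1:ℝ) ≤ (k:ℝ) := by exact_mod_cast le_trans one_le_two hk
    nlinarith
  -- product bound via exp
  have hstep : ∏ i ∈ range k, ((l : ℝ) - i)
      ≤ ∏ i ∈ range k, ((l : ℝ) * Real.exp (-(i / l))) := by
    apply Finset.prod_le_prod
    · intro i hi
      have : (i : ℝ) ≤ l := by
        exact_mod_cast le_trans (le_of_lt (mem_range.mp hi)) hkl
      linarith
    · intro i hi
      have h1 : 1 - (i:ℝ) / l ≤ Real.exp (-(i / l)) := by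
        have := Real.add_one_le_exp (-(( i:ℝ) / l))
        linarith
      have := mul_le_mul_of_nonneg_left h1 hl0.le
      calc (l:ℝ) - i = l * (1 - (i:ℝ)/l) := by field_simp
        _ ≤ l * Real.exp (-(i / l)) := this
  have hprod : ∏ i ∈ range k, ((l : ℝ) * Real.exp (-(i / l)))
      = (l:ℝ) ^ k * Real.exp (-(s / l)) := by
    rw [Finset.prod_mul_distrib, Finset.prod_const, Finset.card_range, ← Real.exp_sum]
    congr 1
    rw [← hsum, Finset.sum_div]
    congr 1
    simp
  have hexp : Real.exp (-(s / l)) ≤ 1 - s / l + (s / l) ^ 2 / 2 :=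
    exp_neg_le_quadratic (by positivity)
  have hmain : ∏ i ∈ range k, ((l : ℝ) - i)
      ≤ (l:ℝ) ^ k * (1 - s / l + (s / l) ^ 2 / 2) := by
    calc ∏ i ∈ range k, ((l : ℝ) - i) ≤ (l:ℝ) ^ k * Real.exp (-(s / l)) := by
          rw [← hprod]; exact hstep
      _ ≤ (l:ℝ) ^ k * (1 - s / l + (s / l) ^ 2 / 2) := by
          apply mul_le_mul_of_nonneg_left hexp (by positivity)
  refine hmain.trans (le_of_eq ?_)
  -- algebraic identity
  obtain ⟨m, rfl⟩ : ∃ m, k = m + 2 := ⟨k - 2, by omega⟩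
  have h1 : m + 2 - 1 = m + 1 := rfl
  have h2 : m + 2 - 2 = m := rfl
  rw [h1, h2]
  have hlne : (l:ℝ) ≠ 0 := ne_of_gt hl0
  field_simp
  ring
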